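/- Let T be a Miller tree and n ∈ ω, and for each t ∈ Br_{n+1}(T) let S_t be a Miller tree with S_t ⊆ T_t. Then T' = ⋃{S_t : t ∈ Br_{n+1}(T)} is a Miller tree, T' ⊆ T, and Br_k(T') = Br_k(T) for every k ≤ n. -/

import Mathlib

/-- `b` is a branching node of `T`: it lies in `T` and has at least two immediate
successors in `T`. -/
def IsBranchNode (T : Set (List ℕ)) (b : List ℕ) : Prop :=
  b ∈ T ∧ ∃ k₁ k₂ : ℕ, k₁ ≠ k₂ ∧ b ++ [k₁] ∈ T ∧ b ++ [k₂] ∈ T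

/-- `T` is a Miller tree: a nonempty set of finite sequences of naturals, closed under
initial segments, in which every element end-extends to a branching node and every
branching node has infinitely many immediate successors. -/
def IsMillerTree (T : Set (List ℕ)) : Prop :=
  T.Nonempty ∧
  (∀ s ∈ T, ∀ u : List ℕ, u <+: s → u ∈ T) ∧
  (∀ s ∈ T, ∃ b : List ℕ, s <+: b ∧ IsBranchNode T b) ∧
  (∀ b : List ℕ, IsBranchNode T b → {k : ℕ | b ++ [k] ∈ T}.Infinite)

/-- `Br n T`: the branching nodes of `T` having exactly `n` proper initial segments that
are branching nodes of `T`. -/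
def Br (n : ℕ) (T : Set (List ℕ)) : Set (List ℕ) :=
  {b | IsBranchNode T b ∧ {u : List ℕ | u <+: b ∧ u ≠ b ∧ IsBranchNode T u}.ncard = n}

/-- `subtreeAt T t = T_t = {s ∈ T : s ⊆ t or t ⊆ s}`. -/
def subtreeAt (T : Set (List ℕ)) (t : List ℕ) : Set (List ℕ) :=
  {s ∈ T | s <+: t ∨ t <+: s}

namespace Stmt11Aux

/-- proper branching prefixes -/
def P (T : Set (List ℕ)) (s : List ℕ) : Set (List ℕ) :=
  {u | u <+: s ∧ u ≠ s ∧ IsBranchNode T u}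

lemma mem_Br {k : ℕ} {T : Set (List ℕ)} {b : List ℕ} :
    b ∈ Br k T ↔ IsBranchNode T b ∧ (P T b).ncard = k := Iff.rfl

lemma prefFin (s : List ℕ) : {u : List ℕ | u <+: s}.Finite := by
  apply Set.Finite.subset (Set.finite_range fun i : Fin (s.length + 1) => s.take i)
  intro u hu
  exact ⟨⟨u.length, Nat.lt_succ_of_le hu.length_le⟩, (List.prefix_iff_eq_take.mp hu).symm⟩

lemma P_fin (T : Set (List ℕ)) (s : List ℕ) : (P T s).Finite :=
  (prefFin s).subset fun _ hu => hu.1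

lemma length_lt_of_prefix_ne {u s : List ℕ} (h : u <+: s) (hne : u ≠ s) :
    u.length < s.length :=
  lt_of_le_of_ne h.length_le fun he => hne (h.eq_of_length he)

lemma insert_P_subset {T : Set (List ℕ)} {u s : List ℕ} (h1 : u <+: s) (h2 : u ≠ s)
    (h3 : IsBranchNode T u) : insert u (P T u) ⊆ P T s := by
  intro v hv
  rcases hv with rfl | hv
  · exact ⟨h1, h2, h3⟩
  · refine ⟨hv.1.trans h1, ?_, hv.2.2⟩
    have l1 := length_lt_of_prefix_ne hv.1 hv.2.1
    have l2 := h1.length_le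
    intro he; subst he; omega

lemma depth_lt {T : Set (List ℕ)} {u s : List ℕ} (h1 : u <+: s) (h2 : u ≠ s)
    (h3 : IsBranchNode T u) : (P T u).ncard + 1 ≤ (P T s).ncard := by
  have hins := insert_P_subset h1 h2 h3
  have hc : (insert u (P T u)).ncard = (P T u).ncard + 1 :=
    Set.ncard_insert_of_notMem (fun hm => hm.2.1 rfl) (P_fin T u)
  calc (P T u).ncard + 1 = (insert u (P T u)).ncard := hc.symm
    _ ≤ (P T s).ncard := Set.ncard_le_ncard hins (P_fin T s)

/-- chain lemma: every smaller depth is realized by a branching prefix -/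
lemma chain {T : Set (List ℕ)} : ∀ N : ℕ, ∀ b : List ℕ, IsBranchNode T b →
    (P T b).ncard = N → ∀ m ≤ N, ∃ u, u <+: b ∧ IsBranchNode T u ∧ (P T u).ncard = m := by
  intro N
  induction N with
  | zero => intro b hb hcard m hm
            exact ⟨b, List.prefix_refl b, hb, by omega⟩
  | succ N ih =>
    intro b hb hcard m hm
    rcases eq_or_lt_of_le hm with rfl | hm'
    · exact ⟨b, List.prefix_refl b, hb, hcard⟩
    · have hne : (P T b).Nonempty := Set.nonempty_of_ncard_ne_zero (by omega)
      obtain ⟨v, hv, hvmax⟩ := Set.exists_max_image (P T b) List.length (P_fin T b) hne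
      have hPv : P T v = P T b \ {v} := by
        ext w
        constructor
        · intro hw
          have hwb : w <+: b := hw.1.trans hv.1
          refine ⟨⟨hwb, ?_, hw.2.2⟩, ?_⟩
          · have l1 := length_lt_of_prefix_ne hw.1 hw.2.1
            have l2 := length_lt_of_prefix_ne hv.1 hv.2.1
            intro he; subst he; omega
          · exact fun he => hw.2.1 he
        · rintro ⟨hw, hwv⟩
          have hwv' : w ≠ v := by simpa using hwv
          have hcmp := List.prefix_or_prefix_of_prefix hw.1 hv.1
          rcases hcmp with h | h
          · exact ⟨h, hwv', hw.2.2⟩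
          · exfalso
            have := hvmax w hw
            exact hwv' ((h.eq_of_length (le_antisymm h.length_le this)).symm)
      have hcv : (P T v).ncard = N := by
        rw [hPv, Set.ncard_diff_singleton_of_mem hv, hcard]; omega
      obtain ⟨u, hu1, hu2, hu3⟩ := ih v hv.2.2 hcv m (by omega)
      exact ⟨u, hu1.trans hv.1, hu2, hu3⟩

lemma ascend {T : Set (List ℕ)} (hT : IsMillerTree T) :
    ∀ m : ℕ, ∀ s ∈ T, ∃ b, s <+: b ∧ IsBranchNode T b ∧ m ≤ (P T b).ncard := by
  intro m
  induction m with
  | zero => intro s hs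
            obtain ⟨b, hb1, hb2⟩ := hT.2.2.1 s hs
            exact ⟨b, hb1, hb2, Nat.zero_le _⟩
  | succ m ih =>
    intro s hs
    obtain ⟨b, hb1, hb2, hb3⟩ := ih s hs
    obtain ⟨k₁, k₂, hk, hk1, hk2⟩ := hb2.2
    obtain ⟨b', hb'1, hb'2⟩ := hT.2.2.1 (b ++ [k₁]) hk1
    have hpre : b <+: b' := (List.prefix_append b [k₁]).trans hb'1
    have hne : b ≠ b' := by
      intro he
      have := hb'1.length_le
      simp [← he] at this
    have := depth_lt hpre hne hb2
    exact ⟨b', hb1.trans hpre, hb'2, by omega⟩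

lemma claimA {T : Set (List ℕ)} (hT : IsMillerTree T) (n : ℕ) {s : List ℕ} (hs : s ∈ T)
    (h : (P T s).ncard ≤ n + 1) : ∃ t ∈ Br (n + 1) T, s <+: t := by
  obtain ⟨b, hb1, hb2, hb3⟩ := ascend hT (n + 1) s hs
  obtain ⟨N, hN⟩ : ∃ N, (P T b).ncard = N := ⟨_, rfl⟩
  obtain ⟨u, hu1, hu2, hu3⟩ := chain N b hb2 hN (n + 1) (by omega)
  refine ⟨u, mem_Br.mpr ⟨hu2, hu3⟩, ?_⟩
  rcases List.prefix_or_prefix_of_prefix hb1 hu1 with h' | h'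
  · exact h'
  · rcases eq_or_ne u s with rfl | hne
    · exact List.prefix_refl u
    · exfalso
      have := depth_lt h' hne hu2
      omega

/-- t belongs to its own Miller subtree -/
lemma mem_self {T St : Set (List ℕ)} {t : List ℕ} (hMil : IsMillerTree St)
    (hsub : St ⊆ subtreeAt T t) : t ∈ St := by
  obtain ⟨s₀, hs₀⟩ := hMil.1
  have h0 : [] ∈ St := hMil.2.1 s₀ hs₀ [] (List.nil_prefix)
  obtain ⟨b, -, hb⟩ := hMil.2.2.1 [] h0
  rcases (hsub hb.1).2 with hbt | htb
  · rcases eq_or_ne b t with rfl | hne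
    · exact hb.1
    · exfalso
      obtain ⟨k₁, k₂, hk, h1, h2⟩ := hb.2
      have hlb : b.length < t.length := length_lt_of_prefix_ne hbt hne
      have p1 : b ++ [k₁] <+: t := by
        rcases (hsub h1).2 with h | h
        · exact h
        · have := h.eq_of_length (le_antisymm h.length_le (by simp; omega))
          rw [this]
      have p2 : b ++ [k₂] <+: t := by
        rcases (hsub h2).2 with h | h
        · exact h
        · have := h.eq_of_length (le_antisymm h.length_le (by simp; omega))
          rw [this]
      have : b ++ [k₁] = b ++ [k₂] := by
        have := List.prefix_of_prefix_length_le p1 p2 (by simp)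
        exact this.eq_of_length (by simp)
      simp at this
      exact hk this
  · exact hMil.2.1 b hb.1 t htb

end Stmt11Aux

open Stmt11Aux

theorem stmt11 (T : Set (List ℕ)) (hT : IsMillerTree T) (n : ℕ)
    (S : List ℕ → Set (List ℕ))
    (hS : ∀ t ∈ Br (n + 1) T, IsMillerTree (S t) ∧ S t ⊆ subtreeAt T t) :
    IsMillerTree (⋃ t ∈ Br (n + 1) T, S t) ∧
    (⋃ t ∈ Br (n + 1) T, S t) ⊆ T ∧
    ∀ k ≤ n, Br k (⋃ t ∈ Br (n + 1) T, S t) = Br k T := by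
  set T' := ⋃ t ∈ Br (n + 1) T, S t with hT'def
  have memT' : ∀ s : List ℕ, s ∈ T' ↔ ∃ t ∈ Br (n + 1) T, s ∈ S t := by
    intro s; simp [hT'def]
  have hsubT : T' ⊆ T := by
    intro s hs
    obtain ⟨t, ht, hst⟩ := (memT' s).mp hs
    exact ((hS t ht).2 hst).1
  have closure : ∀ s ∈ T', ∀ u : List ℕ, u <+: s → u ∈ T' := by
    intro s hs u hu
    obtain ⟨t, ht, hst⟩ := (memT' s).mp hs
    exact (memT' u).mpr ⟨t, ht, (hS t ht).1.2.1 s hst u hu⟩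
  have htSt : ∀ t ∈ Br (n + 1) T, t ∈ S t := fun t ht =>
    mem_self (hS t ht).1 (hS t ht).2
  have claimA' : ∀ s ∈ T, (P T s).ncard ≤ n + 1 → s ∈ T' := by
    intro s hs h
    obtain ⟨t, ht, hst⟩ := claimA hT n hs h
    exact (memT' s).mpr ⟨t, ht, (hS t ht).1.2.1 t (htSt t ht) s hst⟩
  have succMem : ∀ b : List ℕ, IsBranchNode T b → (P T b).ncard ≤ n →
      ∀ k : ℕ, b ++ [k] ∈ T → b ++ [k] ∈ T' := by
    intro b hb hd k hk
    apply claimA' _ hk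
    have hsub : P T (b ++ [k]) ⊆ insert b (P T b) := by
      intro u hu
      have hub : u <+: b := by
        apply List.prefix_of_prefix_length_le hu.1 (List.prefix_append b [k])
        have := length_lt_of_prefix_ne hu.1 hu.2.1
        simp at this; omega
      rcases eq_or_ne u b with rfl | hne
      · exact Set.mem_insert u _
      · exact Set.mem_insert_of_mem _ ⟨hub, hne, hu.2.2⟩
    have h1 : (insert b (P T b)).ncard ≤ (P T b).ncard + 1 :=
      Set.ncard_insert_le b (P T b)
    have h2 := Set.ncard_le_ncard hsub ((P_fin T b).insert b)
    omega
  have lemB : ∀ b : List ℕ, IsBranchNode T b → (P T b).ncard ≤ n → IsBranchNode T' b := by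
    intro b hb hd
    obtain ⟨k₁, k₂, hk, hk1, hk2⟩ := hb.2
    have m1 := succMem b hb hd k₁ hk1
    have m2 := succMem b hb hd k₂ hk2
    exact ⟨closure _ m1 b (List.prefix_append b [k₁]), k₁, k₂, hk, m1, m2⟩
  have branchDown : ∀ b : List ℕ, IsBranchNode T' b → IsBranchNode T b := by
    rintro b ⟨hb, k₁, k₂, hk, h1, h2⟩
    exact ⟨hsubT hb, k₁, k₂, hk, hsubT h1, hsubT h2⟩
  have Peq : ∀ b : List ℕ, (P T b).ncard ≤ n → P T' b = P T b := by
    intro b hd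
    ext u
    constructor
    · intro hu; exact ⟨hu.1, hu.2.1, branchDown u hu.2.2⟩
    · intro hu
      refine ⟨hu.1, hu.2.1, lemB u hu.2.2 ?_⟩
      have := depth_lt hu.1 hu.2.1 hu.2.2
      omega
  refine ⟨⟨?_, closure, ?_, ?_⟩, hsubT, ?_⟩
  · -- nonempty
    obtain ⟨s₀, hs₀⟩ := hT.1
    have h0 : [] ∈ T := hT.2.1 s₀ hs₀ [] List.nil_prefix
    have hP0 : P T ([] : List ℕ) = ∅ := by
      ext u
      simp only [P, Set.mem_setOf_eq, Set.mem_empty_iff_false, iff_false]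
      rintro ⟨h1, h2, -⟩
      exact h2 (List.prefix_nil.mp h1)
    exact ⟨[], claimA' [] h0 (by rw [hP0]; simp)⟩
  · -- extend to branching node
    intro s hs
    obtain ⟨t, ht, hst⟩ := (memT' s).mp hs
    obtain ⟨b, hb1, hb2⟩ := (hS t ht).1.2.2.1 s hst
    obtain ⟨k₁, k₂, hk, h1, h2⟩ := hb2.2
    have hStT' : S t ⊆ T' := fun x hx => (memT' x).mpr ⟨t, ht, hx⟩
    exact ⟨b, hb1, hStT' hb2.1, k₁, k₂, hk, hStT' h1, hStT' h2⟩
  · -- infinitely many successors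
    rintro b ⟨hbT', k₁, k₂, hk, hk1, hk2⟩
    obtain ⟨t₁, ht₁, h1⟩ := (memT' _).mp hk1
    obtain ⟨t₂, ht₂, h2⟩ := (memT' _).mp hk2
    rcases eq_or_ne t₁ t₂ with rfl | htne
    · -- same subtree
      have hbS : b ∈ S t₁ := (hS t₁ ht₁).1.2.1 _ h1 b (List.prefix_append b [k₁])
      have hbr : IsBranchNode (S t₁) b := ⟨hbS, k₁, k₂, hk, h1, h2⟩
      have hinf := (hS t₁ ht₁).1.2.2.2 b hbr
      apply hinf.mono
      intro k hkk
      exact (memT' _).mpr ⟨t₁, ht₁, hkk⟩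
    · -- different subtrees: b is a proper prefix of t₁
      have hb1 : b ∈ S t₁ := (hS t₁ ht₁).1.2.1 _ h1 b (List.prefix_append b [k₁])
      have hb2 : b ∈ S t₂ := (hS t₂ ht₂).1.2.1 _ h2 b (List.prefix_append b [k₂])
      have incomp : ∀ t ∈ Br (n + 1) T, ∀ t' ∈ Br (n + 1) T, t <+: t' → t = t' := by
        intro t ht t' ht' hpre
        by_contra hne
        have := depth_lt hpre hne (mem_Br.mp ht).1
        have e1 := (mem_Br.mp ht).2
        have e2 := (mem_Br.mp ht').2
        omega
      have hcase : b <+: t₁ ∧ b ≠ t₁ := by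
        have c1 := ((hS t₁ ht₁).2 hb1).2
        have c2 := ((hS t₂ ht₂).2 hb2).2
        have hnot : ¬ t₁ <+: b := by
          intro h
          rcases c2 with h' | h'
          · exact htne (incomp t₁ ht₁ t₂ ht₂ (h.trans h'))
          · rcases List.prefix_or_prefix_of_prefix h h' with hh | hh
            · exact htne (incomp t₁ ht₁ t₂ ht₂ hh)
            · exact htne (incomp t₂ ht₂ t₁ ht₁ hh).symm
        rcases c1 with h | h
        · exact ⟨h, fun he => hnot (he ▸ List.prefix_refl b)⟩
        · exact absurd h hnot
      have hbrT : IsBranchNode T b :=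
        ⟨hsubT hbT', k₁, k₂, hk, hsubT hk1, hsubT hk2⟩
      have hd : (P T b).ncard ≤ n := by
        have := depth_lt hcase.1 hcase.2 hbrT
        have := (mem_Br.mp ht₁).2
        omega
      have hinf := hT.2.2.2 b hbrT
      apply hinf.mono
      intro k hkk
      exact succMem b hbrT hd k hkk
  · -- Br k equality
    intro k hkn
    ext b
    constructor
    · intro hb
      obtain ⟨hbr', hcard'⟩ := mem_Br.mp hb
      have hbr := branchDown b hbr'
      obtain ⟨t, ht, hbSt⟩ := (memT' b).mp hbr'.1
      by_cases htb : t <+: b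
      · exfalso
        have hsub : P T t ⊆ P T' b := by
          intro u hu
          have hut := length_lt_of_prefix_ne hu.1 hu.2.1
          have htb' := htb.length_le
          refine ⟨hu.1.trans htb, by intro he; subst he; omega, ?_⟩
          apply lemB u hu.2.2
          have := depth_lt hu.1 hu.2.1 hu.2.2
          have := (mem_Br.mp ht).2
          omega
        have hfin : (P T' b).Finite := (prefFin b).subset fun _ hu => hu.1
        have := Set.ncard_le_ncard hsub hfin
        have := (mem_Br.mp ht).2
        omega
      · have hbt : b <+: t ∧ b ≠ t := by
          rcases ((hS t ht).2 hbSt).2 with h | h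
          · exact ⟨h, fun he => htb (he ▸ List.prefix_refl b)⟩
          · exact absurd h htb
        have hd : (P T b).ncard ≤ n := by
          have := depth_lt hbt.1 hbt.2 hbr
          have := (mem_Br.mp ht).2
          omega
        refine mem_Br.mpr ⟨hbr, ?_⟩
        rw [← Peq b hd]
        exact hcard'
    · intro hb
      obtain ⟨hbr, hcard⟩ := mem_Br.mp hb
      have hd : (P T b).ncard ≤ n := by omega
      exact mem_Br.mpr ⟨lemB b hbr hd, by rw [Peq b hd]; exact hcard⟩
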